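/- Let T be a bounded self-adjoint operator on a real Hilbert space H with ⟨u, T u⟩ ≥ 0 for all u, let E be a finite-dimensional subspace of H with T(E) ⊆ E and ⟨u, T u⟩ ≥ μ ‖u‖² for all u ∈ E, where μ > 0, and let Φ be a closed subspace of H with d_2(E, Φ) < 1. Then for every nonzero q ∈ P_Φ(E), one has ⟨q, T q⟩ ≥ (1 − d_2(E, Φ)²) · μ · ‖q‖². -/

import Mathlib

open scoped RealInnerProductSpace ENNReal
open Submodule Filter

noncomputable section

variable {H : Type*} [NormedAddCommGroup H] [InnerProductSpace ℝ H] [CompleteSpace H]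

/-- Orthogonal projection onto `U`, as an operator `H → H` (defined to be `0` in the
degenerate case where `U` admits no orthogonal projection). -/
noncomputable def proj (U : Submodule ℝ H) : H →L[ℝ] H := by
  classical
  exact if h : HasOrthogonalProjection U then
    (haveI := h; U.subtypeL ∘L orthogonalProjection U)
  else 0

/-- Squared Hilbert–Schmidt norm of an operator, computed in a fixed Hilbert basis of `H`. -/
noncomputable def hsNormSq (A : H →L[ℝ] H) : ℝ≥0∞ :=
  ∑' i : (exists_hilbertBasis ℝ H).choose,
    (‖A ((exists_hilbertBasis ℝ H).choose_spec.choose i)‖₊ : ℝ≥0∞) ^ 2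

/-- Hilbert–Schmidt (Frobenius) norm of an operator. -/
noncomputable def hsNorm (A : H →L[ℝ] H) : ℝ := Real.sqrt (hsNormSq A).toReal

/-- Projection distance `d_F(U, W) = ‖P_{Wᗮ} P_U‖_F`. -/
noncomputable def dF (U W : Submodule ℝ H) : ℝ := hsNorm ((proj Wᗮ) ∘L (proj U))

/-- Gap distance `d₂(U, W) = ‖P_{Wᗮ} P_U‖₂`. -/
noncomputable def d2 (U W : Submodule ℝ H) : ℝ := ‖(proj Wᗮ) ∘L (proj U)‖


set_option linter.unusedSectionVars false in
lemma proj_apply (U : Submodule ℝ H) [h : HasOrthogonalProjection U] (x : H) :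
    proj U x = (orthogonalProjection U x : H) := by
  simp [proj, dif_pos h]

lemma proj_mem (U : Submodule ℝ H) [HasOrthogonalProjection U] (x : H) :
    proj U x ∈ U := by rw [proj_apply]; exact (orthogonalProjection U x).2

lemma proj_eq_self (U : Submodule ℝ H) [HasOrthogonalProjection U] {x : H} (hx : x ∈ U) :
    proj U x = x := by
  rw [proj_apply]; exact Submodule.starProjection_eq_self_iff.mpr hx

/-- If `T` is self-adjoint and nonnegative, `E` is a finite-dimensional
invariant subspace on which `⟨u, T u⟩ ≥ μ ‖u‖²` with `μ > 0`, and `Φ` is a closed subspace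
with `d₂(E, Φ) < 1`, then every nonzero `q ∈ P_Φ(E)` satisfies
`⟨q, T q⟩ ≥ (1 − d₂(E, Φ)²) μ ‖q‖²`. -/
theorem stmt18 {H : Type*} [NormedAddCommGroup H] [InnerProductSpace ℝ H] [CompleteSpace H]
    (T : H →L[ℝ] H)
    (hTsa : ∀ x y : H, ⟪T x, y⟫ = ⟪x, T y⟫)
    (hTpos : ∀ u : H, 0 ≤ ⟪u, T u⟫)
    (E : Submodule ℝ H) (hEfd : FiniteDimensional ℝ E)
    (hTE : ∀ x ∈ E, T x ∈ E)
    (μ : ℝ) (hμ : 0 < μ)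
    (hTlow : ∀ u ∈ E, μ * ‖u‖ ^ 2 ≤ ⟪u, T u⟫)
    (Φ : Submodule ℝ H) (hΦcl : IsClosed (Φ : Set H))
    (hd2 : d2 E Φ < 1) :
    ∀ q ∈ Submodule.map ((proj Φ : H →L[ℝ] H) : H →ₗ[ℝ] H) E, q ≠ 0 →
      (1 - d2 E Φ ^ 2) * μ * ‖q‖ ^ 2 ≤ ⟪q, T q⟫ := by
  intro q hq hq0
  obtain ⟨p, hpE, hpq⟩ := hq
  haveI : FiniteDimensional ℝ E := hEfd
  haveI : CompleteSpace Φ := hΦcl.completeSpace_coe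
  have hq' : proj Φ p = q := hpq
  set d := d2 E Φ with hdd
  have hd0 : 0 ≤ d := by rw [hdd, d2]; exact norm_nonneg _
  have hd1 : 0 < 1 - d ^ 2 := by nlinarith
  set r : H := proj Φᗮ p with hr
  have hsum : q + r = p := by
    rw [← hq', hr, proj_apply, proj_apply]
    exact Φ.starProjection_add_starProjection_orthogonal p
  have hqΦ : q ∈ Φ := hq' ▸ proj_mem Φ p
  have hrΦ : r ∈ Φᗮ := proj_mem Φᗮ p
  have hqr0 : ⟪q, r⟫ = 0 := Submodule.inner_right_of_mem_orthogonal hqΦ hrΦ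
  have hrle : ‖r‖ ≤ d * ‖p‖ := by
    have h1 : ((proj Φᗮ) ∘L (proj E)) p = r := by
      simp [ContinuousLinearMap.comp_apply, proj_eq_self E hpE, hr]
    calc ‖r‖ = ‖((proj Φᗮ) ∘L (proj E)) p‖ := by rw [h1]
      _ ≤ d * ‖p‖ := ContinuousLinearMap.le_opNorm _ p
  have hnorm : ‖p‖ ^ 2 = ‖q‖ ^ 2 + ‖r‖ ^ 2 := by
    rw [← hsum, norm_add_sq_real, hqr0]; ring
  have hq2 : (1 - d ^ 2) * ‖p‖ ^ 2 ≤ ‖q‖ ^ 2 := by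
    nlinarith [norm_nonneg p, norm_nonneg r]
  have hip : ⟪q, p⟫ = ‖q‖ ^ 2 := by
    rw [← hsum, inner_add_right, hqr0, real_inner_self_eq_norm_sq]; ring
  set s : H := proj E q with hs
  have hsE : s ∈ E := proj_mem E q
  set w : H := q - s with hw
  have hwE : w ∈ Eᗮ := by
    rw [hw, hs, proj_apply]; exact E.sub_starProjection_mem_orthogonal q
  have hTwE : T w ∈ Eᗮ := by
    rw [Submodule.mem_orthogonal]
    intro u hu
    rw [← hTsa]
    exact Submodule.inner_right_of_mem_orthogonal (hTE u hu) hwE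
  have hqsw : q = s + w := by rw [hw]; abel
  have hcross : ⟪q, T q⟫ = ⟪s, T s⟫ + ⟪w, T w⟫ := by
    rw [hqsw, map_add, inner_add_left, inner_add_right, inner_add_right]
    have h1 : ⟪s, T w⟫ = 0 := Submodule.inner_right_of_mem_orthogonal hsE hTwE
    have h2 : ⟪w, T s⟫ = 0 := Submodule.inner_left_of_mem_orthogonal (hTE s hsE) hwE
    rw [h1, h2]; ring
  have hlow : μ * ‖s‖ ^ 2 ≤ ⟪q, T q⟫ := by
    have h1 := hTlow s hsE
    have h2 := hTpos w
    linarith [hcross]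
  have hsp : ‖q‖ ^ 2 ≤ ‖s‖ * ‖p‖ := by
    have h1 : ⟪q, p⟫ = ⟪s, p⟫ := by
      rw [hqsw, inner_add_left, Submodule.inner_left_of_mem_orthogonal hpE hwE]; ring
    calc ‖q‖ ^ 2 = ⟪s, p⟫ := by rw [← hip, h1]
      _ ≤ ‖s‖ * ‖p‖ := real_inner_le_norm s p
  have hq0' : 0 < ‖q‖ := norm_pos_iff.mpr hq0
  have hfinal : (1 - d ^ 2) * ‖q‖ ^ 2 ≤ ‖s‖ ^ 2 := by
    nlinarith [norm_nonneg s, norm_nonneg p, sq_nonneg (‖s‖ * ‖p‖ - ‖q‖ ^ 2),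
      mul_le_mul_of_nonneg_left hq2 (sq_nonneg ‖s‖), mul_pos hq0' hq0']
  calc (1 - d ^ 2) * μ * ‖q‖ ^ 2 ≤ μ * ‖s‖ ^ 2 := by nlinarith
    _ ≤ ⟪q, T q⟫ := hlow

end
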